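/- Let d ≥ 2, let ρ : SL₂(ℤ) → GLd(ℂ) and suppose F ∈ H(k,ρ,υ) is a vector-valued modular form of weight k whose d component functions f₁,…,f_d are linearly independent over ℂ. Then for each n ≤ d, the set {F, D_kF, …, D_k^{n−1}F} is linearly independent over the ring M = ℂ[E₄,E₆] of level-one holomorphic modular forms. -/

import Mathlib

open Real Complex Matrix

abbrev SL2Z := Matrix.SpecialLinearGroup (Fin 2) ℤ

/-- The upper half-plane as a subset of `ℂ`. -/
def UH : Set ℂ := {z : ℂ | 0 < z.im}

/-- The normalized Eisenstein series `E_m` as a function of `z` on the upper half-plane: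
`E_m(z) = 1 − (2m/B_m) Σ_{n≥1} σ_{m−1}(n) e^{2πinz}`.  (`Ez 2` is the quasimodular `E₂`.) -/
noncomputable def Ez (m : ℕ) (z : ℂ) : ℂ :=
  1 - (2 * m / ((bernoulli m : ℚ) : ℂ)) *
    ∑' n : ℕ, ((∑ d ∈ Nat.divisors (n + 1), d ^ (m - 1) : ℕ) : ℂ) *
      Complex.exp (2 * π * Complex.I * (n + 1) * z)

/-- The modular derivative in weight `k`, in the variable `z`. -/
noncomputable def serreDz (k : ℝ) (f : ℂ → ℂ) : ℂ → ℂ :=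
  fun z => (1 / (2 * π * Complex.I)) * deriv f z - (k / 12 : ℂ) * Ez 2 z * f z

/-- Iterated modular derivative `D_k^n`. -/
noncomputable def serreDzIter : ℕ → ℝ → (ℂ → ℂ) → (ℂ → ℂ)
  | 0, _, f => f
  | n + 1, k, f => serreDz (k + 2 * n) (serreDzIter n k f)

/-- Moderate growth at infinity. -/
def ModerateGrowth (f : ℂ → ℂ) : Prop :=
  ∃ N : ℕ, ∀ x : ℝ, ∃ Y : ℝ, ∀ y : ℝ, Y ≤ y →
    ‖f (x + y * Complex.I)‖ < y ^ N

/-- `F` is a holomorphic vector-valued modular form of weight `k` for `(ρ, υ)`. -/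
def IsVVMF {d : ℕ} (k : ℝ) (ρ : SL2Z →* GL (Fin d) ℂ) (υ : SL2Z → ℂ)
    (F : Fin d → ℂ → ℂ) : Prop :=
  (∀ i, DifferentiableOn ℂ (F i) UH) ∧
  (∀ i, ModerateGrowth (F i)) ∧
  ∀ γ : SL2Z, ∀ z ∈ UH, ∀ i,
    F i ((((γ : Matrix (Fin 2) (Fin 2) ℤ) 0 0 : ℂ) * z + ((γ : Matrix (Fin 2) (Fin 2) ℤ) 0 1 : ℂ)) /
        (((γ : Matrix (Fin 2) (Fin 2) ℤ) 1 0 : ℂ) * z + ((γ : Matrix (Fin 2) (Fin 2) ℤ) 1 1 : ℂ)))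
      = υ γ *
        (((γ : Matrix (Fin 2) (Fin 2) ℤ) 1 0 : ℂ) * z
            + ((γ : Matrix (Fin 2) (Fin 2) ℤ) 1 1 : ℂ)) ^ (k : ℂ) *
        ∑ j, ((ρ γ : Matrix (Fin d) (Fin d) ℂ) i j) * F j z


section AuxVVMF

lemma UH_open : IsOpen UH := isOpen_lt continuous_const Complex.continuous_im

lemma UH_preconnected : IsPreconnected UH := (convex_halfSpace_im_gt 0).isPreconnected

lemma sigma_le (m n : ℕ) :
    ((∑ d ∈ Nat.divisors (n + 1), d ^ (m - 1) : ℕ) : ℝ) ≤ ((n:ℝ) + 1) ^ (m + 1) := by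
  have h1 : (∑ d ∈ Nat.divisors (n + 1), d ^ (m - 1)) ≤ (n+1) ^ (m+1) := by
    calc (∑ d ∈ Nat.divisors (n + 1), d ^ (m - 1))
        ≤ ∑ _d ∈ Nat.divisors (n + 1), (n+1) ^ m := by
          apply Finset.sum_le_sum
          intro d hd
          have hd1 : d ≤ n + 1 := Nat.le_of_dvd (Nat.succ_pos n) (Nat.mem_divisors.mp hd).1
          calc d ^ (m-1) ≤ (n+1) ^ (m-1) := Nat.pow_le_pow_left hd1 _
            _ ≤ (n+1) ^ m := Nat.pow_le_pow_right (Nat.succ_le_succ (Nat.zero_le n)) (Nat.sub_le m 1)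
      _ = (Nat.divisors (n+1)).card * (n+1) ^ m := by rw [Finset.sum_const, smul_eq_mul]
      _ ≤ (n+1) * (n+1) ^ m := by
          gcongr
          calc (Nat.divisors (n+1)).card ≤ (Finset.Icc 1 (n+1)).card := by
                apply Finset.card_le_card
                intro d hd
                exact Finset.mem_Icc.mpr ⟨Nat.pos_of_mem_divisors hd,
                  Nat.le_of_dvd (Nat.succ_pos n) (Nat.mem_divisors.mp hd).1⟩
            _ = n + 1 := by simp
      _ = (n+1) ^ (m+1) := by ring
  calc ((∑ d ∈ Nat.divisors (n + 1), d ^ (m - 1) : ℕ) : ℝ) ≤ (((n+1) ^ (m+1) : ℕ) : ℝ) := by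
        exact_mod_cast h1
    _ = ((n:ℝ) + 1) ^ (m + 1) := by push_cast; ring

lemma Ez_analytic (m : ℕ) : AnalyticOnNhd ℂ (Ez m) UH := by
  apply DifferentiableOn.analyticOnNhd _ UH_open
  apply DifferentiableOn.const_sub
  apply DifferentiableOn.const_mul
  intro z0 hz0
  have him : 0 < z0.im := hz0
  set ε : ℝ := z0.im / 2 with hεdef
  have hε0 : 0 < ε := by positivity
  set U : Set ℂ := {z : ℂ | ε < z.im} with hUdef
  have hUopen : IsOpen U := isOpen_lt continuous_const Complex.continuous_im
  have hz0U : z0 ∈ U := by simp only [hUdef, Set.mem_setOf_eq, hεdef]; linarith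
  set r : ℝ := Real.exp (-(2 * π * ε)) with hrdef
  have hr1 : r < 1 := by
    rw [hrdef, Real.exp_lt_one_iff]
    have := Real.pi_pos
    nlinarith
  have hr0 : 0 < r := Real.exp_pos _
  have hsum : Summable (fun n : ℕ => ((n : ℝ) + 1) ^ (m + 1) * r ^ (n + 1)) := by
    have h := summable_pow_mul_geometric_of_norm_lt_one (k := m + 1) (r := r)
      (by rwa [Real.norm_eq_abs, abs_of_pos hr0])
    have h2 := h.comp_injective Nat.succ_injective
    apply h2.congr
    intro n
    simp only [Function.comp_apply, Nat.succ_eq_add_one]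
    push_cast
    ring
  have hdiff : DifferentiableOn ℂ
      (fun z => ∑' n : ℕ, ((∑ d ∈ Nat.divisors (n + 1), d ^ (m - 1) : ℕ) : ℂ) *
        Complex.exp (2 * π * Complex.I * (n + 1) * z)) U := by
    refine differentiableOn_tsum_of_summable_norm hsum ?_ hUopen ?_
    · intro n
      apply Differentiable.differentiableOn
      apply Differentiable.mul (differentiable_const _)
      apply Differentiable.cexp
      exact (differentiable_const _).mul differentiable_id
    · intro n w hw
      have hre : (2 * (π:ℂ) * Complex.I * ((n:ℂ) + 1) * w).re = -(2 * π * ((n:ℝ)+1) * w.im) := by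
        simp only [Complex.mul_re, Complex.mul_im, Complex.I_re, Complex.I_im,
          Complex.ofReal_re, Complex.ofReal_im, Complex.add_re, Complex.add_im,
          Complex.natCast_re, Complex.natCast_im, Complex.one_re, Complex.one_im,
          Complex.re_ofNat, Complex.im_ofNat]
        ring
      rw [norm_mul, Complex.norm_exp, hre,
        Complex.norm_natCast]
      have h1 : Real.exp (-(2 * π * ((n:ℝ)+1) * w.im)) ≤ r ^ (n+1) := by
        rw [hrdef, ← Real.exp_nat_mul]
        apply Real.exp_le_exp.mpr
        have hwim : ε ≤ w.im := le_of_lt hw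
        have hπ := Real.pi_pos
        push_cast
        nlinarith [mul_le_mul_of_nonneg_left hwim (by positivity : (0:ℝ) ≤ 2 * π * ((n:ℝ)+1))]
      exact mul_le_mul (sigma_le m n) h1 (le_of_lt (Real.exp_pos _)) (by positivity)
  exact (hdiff.differentiableAt (hUopen.mem_nhds hz0U)).differentiableWithinAt

lemma adjoin_analytic {f : ℂ → ℂ} (hf : f ∈ Algebra.adjoin ℂ ({Ez 4, Ez 6} : Set (ℂ → ℂ))) :
    AnalyticOnNhd ℂ f UH := by
  induction hf using Algebra.adjoin_induction with
  | mem g hg => rcases hg with rfl | rfl <;> [exact Ez_analytic 4; exact Ez_analytic 6]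
  | algebraMap c => exact analyticOnNhd_const
  | add g h _ _ hg hh => exact hg.add hh
  | mul g h _ _ hg hh => exact hg.mul hh

lemma analytic_iter {f : ℂ → ℂ} (hf : AnalyticOnNhd ℂ f UH) (l : ℕ) :
    AnalyticOnNhd ℂ (deriv^[l] f) UH := by
  induction l with
  | zero => exact hf
  | succ l ih => rw [Function.iterate_succ_apply']; exact ih.deriv

lemma comb_analytic {d : ℕ} {F : Fin d → ℂ → ℂ} (hF : ∀ i, AnalyticOnNhd ℂ (F i) UH)
    (c : Fin d → ℂ) : AnalyticOnNhd ℂ (fun w => ∑ i, c i * F i w) UH := by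
  rw [show (fun w => ∑ i, c i * F i w) = ∑ i, (fun w => c i * F i w) from by
    funext w; simp [Finset.sum_apply]]
  apply Finset.analyticOnNhd_sum
  intro i _
  exact analyticOnNhd_const.mul (hF i)

lemma iter_deriv_sum {d : ℕ} {F : Fin d → ℂ → ℂ} (hF : ∀ i, AnalyticOnNhd ℂ (F i) UH)
    (c : Fin d → ℂ) (l : ℕ) : ∀ z ∈ UH,
    deriv^[l] (fun w => ∑ i, c i * F i w) z = ∑ i, c i * deriv^[l] (F i) z := by
  induction l with
  | zero => intro z hz; simp
  | succ l ih =>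
    intro z hz
    rw [Function.iterate_succ_apply']
    have h1 : deriv (deriv^[l] fun w => ∑ i, c i * F i w) z
        = deriv (fun w => ∑ i, c i * deriv^[l] (F i) w) z := by
      apply Filter.EventuallyEq.deriv_eq
      filter_upwards [UH_open.mem_nhds hz] with y hy
      exact ih y hy
    rw [h1, deriv_fun_sum (fun i _ => ((analytic_iter (hF i) l z hz).differentiableAt).const_mul _)]
    refine Finset.sum_congr rfl fun i _ => ?_
    rw [deriv_const_mul _ ((analytic_iter (hF i) l z hz).differentiableAt),
      show deriv (deriv^[l] (F i)) z = deriv^[l+1] (F i) z from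
        (Function.iterate_succ_apply' deriv l (F i) ▸ rfl)]

lemma serre_poly (k : ℝ) (j : ℕ) :
    ∃ a : ℕ → ℂ → ℂ,
      (∀ l, AnalyticOnNhd ℂ (a l) UH) ∧
      (a j = fun _ => (1 / (2 * (π:ℂ) * Complex.I)) ^ j) ∧
      (∀ l, j < l → a l = fun _ => 0) ∧
      (∀ f : ℂ → ℂ, AnalyticOnNhd ℂ f UH → ∀ z ∈ UH,
        serreDzIter j k f z = ∑ l ∈ Finset.range (j+1), a l z * deriv^[l] f z) := by
  induction j with
  | zero =>
    refine ⟨fun l => if l = 0 then (fun _ => 1) else (fun _ => 0), ?_, ?_, ?_, ?_⟩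
    · intro l; by_cases h : l = 0 <;> simp [h] <;> exact analyticOnNhd_const
    · simp
    · intro l hl
      have : l ≠ 0 := by omega
      simp [this]
    · intro f hf z hz; simp [serreDzIter]
  | succ j ih =>
    obtain ⟨a, ha, haj, ha0, hrepr⟩ := ih
    set c : ℂ := 1 / (2 * (π:ℂ) * Complex.I) with hc
    set w : ℂ := ((k + 2 * (j:ℝ) : ℝ) : ℂ) / 12 with hw
    refine ⟨fun l z => c * deriv (a l) z - w * Ez 2 z * a l z
        + c * (if l = 0 then 0 else a (l-1) z), ?_, ?_, ?_, ?_⟩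
    · intro l
      have h1 : AnalyticOnNhd ℂ (fun z => c * deriv (a l) z - w * Ez 2 z * a l z) UH :=
        (analyticOnNhd_const.mul (ha l).deriv).sub
          ((analyticOnNhd_const.mul (Ez_analytic 2)).mul (ha l))
      by_cases h : l = 0
      · subst h
        simp only [if_true, mul_zero, add_zero, if_pos rfl]
        exact h1
      · simp only [h, if_false]
        exact h1.add (analyticOnNhd_const.mul (ha (l-1)))
    · funext z
      have h1 : a (j+1) = fun _ => (0:ℂ) := ha0 (j+1) (Nat.lt_succ_self j)
      simp only [h1, haj, Nat.add_sub_cancel, Nat.succ_ne_zero, if_false, deriv_const']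
      ring
    · intro l hl
      funext z
      have h1 : a l = fun _ => (0:ℂ) := ha0 l (Nat.lt_of_succ_lt hl)
      have h2 : a (l-1) = fun _ => (0:ℂ) := ha0 (l-1) (by omega)
      have h3 : l ≠ 0 := by omega
      simp [h1, h2, h3, deriv_const']
    · intro f hf z hz
      have hdiffs : ∀ l, DifferentiableAt ℂ (fun y => a l y * deriv^[l] f y) z :=
        fun l => ((ha l z hz).differentiableAt).mul ((analytic_iter hf l z hz).differentiableAt)
      have hEq : (fun y => serreDzIter j k f y) =ᶠ[nhds z]
          (fun y => ∑ l ∈ Finset.range (j+1), a l y * deriv^[l] f y) := by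
        filter_upwards [UH_open.mem_nhds hz] with y hy
        exact hrepr f hf y hy
      have hderiv : deriv (serreDzIter j k f) z
          = ∑ l ∈ Finset.range (j+1), (deriv (a l) z * deriv^[l] f z
              + a l z * deriv^[l+1] f z) := by
        rw [hEq.deriv_eq]
        rw [deriv_fun_sum (fun l _ => hdiffs l)]
        refine Finset.sum_congr rfl fun l _ => ?_
        rw [deriv_fun_mul ((ha l z hz).differentiableAt) ((analytic_iter hf l z hz).differentiableAt)]
        rw [← Function.iterate_succ_apply' deriv l f]
      have hval : serreDzIter (j+1) k f z
          = c * deriv (serreDzIter j k f) z - w * Ez 2 z * serreDzIter j k f z := by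
        simp only [serreDzIter, serreDz, hc, hw]
      rw [hval, hderiv, hrepr f hf z hz]
      have hz1 : a (j+1) = fun _ => (0:ℂ) := ha0 _ (Nat.lt_succ_self _)
      have hT : ∀ (S : ℕ → ℂ),
          c * (∑ l ∈ Finset.range (j + 1), (deriv (a l) z * S l + a l z * S (l+1)))
            - w * Ez 2 z * ∑ l ∈ Finset.range (j + 1), a l z * S l
          = ∑ l ∈ Finset.range (j + 2),
              (c * deriv (a l) z - w * Ez 2 z * a l z
                + c * (if l = 0 then 0 else a (l-1) z)) * S l := by
        intro S
        have e2 : ∑ l ∈ Finset.range (j + 2),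
            (c * deriv (a l) z - w * Ez 2 z * a l z
              + c * (if l = 0 then 0 else a (l-1) z)) * S l
            = (∑ l ∈ Finset.range (j + 2), (c * deriv (a l) z - w * Ez 2 z * a l z) * S l)
              + ∑ l ∈ Finset.range (j + 2),
                  (c * (if l = 0 then 0 else a (l-1) z)) * S l := by
          rw [← Finset.sum_add_distrib]
          exact Finset.sum_congr rfl fun l _ => by ring
        rw [e2, Finset.sum_range_succ (fun l => (c * deriv (a l) z - w * Ez 2 z * a l z) * S l),
          Finset.sum_range_succ' (fun l => (c * (if l = 0 then 0 else a (l-1) z)) * S l)]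
        simp only [hz1, deriv_const', mul_zero, zero_mul, sub_zero, add_zero, if_true,
          Nat.add_sub_cancel, Nat.succ_ne_zero, if_false, zero_sub, neg_zero, if_pos rfl]
        rw [Finset.mul_sum, Finset.mul_sum, ← Finset.sum_sub_distrib, ← Finset.sum_add_distrib]
        exact Finset.sum_congr rfl fun l _ => by ring
      exact hT (fun l => deriv^[l] f z)

lemma ode_vanish {m : ℕ} (hm : 0 < m) {B : ℕ → ℂ → ℂ} (hBan : ∀ l, AnalyticOnNhd ℂ (B l) UH)
    {f : ℂ → ℂ} (hf : AnalyticOnNhd ℂ f UH) {z0 : ℂ} (hz0 : z0 ∈ UH)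
    {r : ℝ} (hr : 0 < r) (hball : Metric.ball z0 r ⊆ UH)
    (hBm : ∀ z ∈ Metric.ball z0 r, B m z ≠ 0)
    (hjets : ∀ l, l < m → deriv^[l] f z0 = 0)
    (hode : ∀ z ∈ UH, ∑ l ∈ Finset.range (m+1), B l z * deriv^[l] f z = 0) :
    ∀ t ∈ Set.Icc (0:ℝ) (r/2), f (z0 + t) = 0 := by
  classical
  set δ : ℝ := r / 2 with hδdef
  have hδ0 : 0 < δ := by positivity
  have hδr : δ < r := by simp [hδdef]; linarith
  set proj : ℝ → ℝ := fun t => max 0 (min t δ) with hproj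
  have hproj_mem : ∀ t, proj t ∈ Set.Icc (0:ℝ) δ :=
    fun t => ⟨le_max_left _ _, max_le hδ0.le (min_le_right _ _)⟩
  have hproj_eq : ∀ t ∈ Set.Icc (0:ℝ) δ, proj t = t := by
    intro t ht
    simp only [hproj, min_eq_left ht.2, max_eq_right ht.1]
  have hproj_cont : Continuous proj :=
    continuous_const.max (continuous_id.min continuous_const)
  set γ : ℝ → ℂ := fun t => z0 + (proj t : ℂ) with hγ
  have hγcont : Continuous γ :=
    continuous_const.add (Complex.continuous_ofReal.comp hproj_cont)
  have hmem_ball : ∀ s ∈ Set.Icc (0:ℝ) δ, z0 + (s:ℂ) ∈ Metric.ball z0 r := by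
    intro s hs
    simp only [Metric.mem_ball, Complex.dist_eq, add_sub_cancel_left, Complex.norm_real, Real.norm_eq_abs]
    rw [_root_.abs_of_nonneg hs.1]
    linarith [hs.2]
  have hγball : ∀ t, γ t ∈ Metric.ball z0 r := fun t => hmem_ball _ (hproj_mem t)
  have hγUH : ∀ t, γ t ∈ UH := fun t => hball (hγball t)
  set R : ℕ → ℝ → ℂ := fun l t => B l (γ t) / B m (γ t) with hR
  have hRcont : ∀ l, Continuous (R l) := by
    intro l
    apply Continuous.div
    · exact (hBan l).continuousOn.comp_continuous hγcont hγUH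
    · exact (hBan m).continuousOn.comp_continuous hγcont hγUH
    · exact fun t => hBm _ (hγball t)
  set Nsum : ℝ → ℝ := fun t => ∑ l ∈ Finset.range m, ‖R l t‖ with hNs
  have hNcont : Continuous Nsum := by
    apply continuous_finset_sum
    exact fun l _ => (hRcont l).norm
  obtain ⟨C, hC⟩ := (isCompact_Icc (a := (0:ℝ)) (b := δ)).exists_bound_of_continuousOn
    hNcont.continuousOn
  have hNbound : ∀ t, Nsum t ≤ max 1 C := by
    intro t
    have h1 : Nsum t = Nsum (proj t) := by
      simp only [hNs, hR, hγ, hproj_eq _ (hproj_mem t)]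
    rw [h1]
    calc Nsum (proj t) ≤ ‖Nsum (proj t)‖ := le_abs_self _
      _ ≤ C := hC _ (hproj_mem t)
      _ ≤ max 1 C := le_max_right _ _
  set K : NNReal := Real.toNNReal (max 1 C) with hK
  have hK1 : 1 ≤ (K : ℝ) := by
    rw [hK, Real.coe_toNNReal _ (le_trans zero_le_one (le_max_left _ _))]
    exact le_max_left _ _
  have hKub : ∀ t, Nsum t ≤ (K : ℝ) := by
    intro t
    rw [hK, Real.coe_toNNReal _ (le_trans zero_le_one (le_max_left _ _))]
    exact hNbound t
  set v : ℝ → (Fin m → ℂ) → (Fin m → ℂ) :=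
    fun t x l => if h : (l : ℕ) + 1 < m then x ⟨(l : ℕ) + 1, h⟩
      else -∑ i : Fin m, R (i : ℕ) t * x i with hv
  have hv0 : ∀ t, v t 0 = 0 := by
    intro t
    funext l
    by_cases h : (l : ℕ) + 1 < m <;> simp [hv, h]
  have hlip : ∀ t, LipschitzWith K (v t) := by
    intro t
    apply LipschitzWith.of_dist_le_mul
    intro x y
    rw [dist_pi_le_iff (by positivity)]
    intro l
    by_cases h : (l : ℕ) + 1 < m
    · simp only [hv, dif_pos h]
      calc dist (x ⟨(l:ℕ)+1, h⟩) (y ⟨(l:ℕ)+1, h⟩) ≤ dist x y := dist_le_pi_dist x y _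
        _ ≤ K * dist x y := le_mul_of_one_le_left dist_nonneg hK1
    · simp only [hv, dif_neg h]
      rw [dist_neg_neg, dist_eq_norm, ← Finset.sum_sub_distrib]
      calc ‖∑ i : Fin m, (R (i:ℕ) t * x i - R (i:ℕ) t * y i)‖
          ≤ ∑ i : Fin m, ‖R (i:ℕ) t * (x i - y i)‖ := by
            rw [show (fun i : Fin m => R (i:ℕ) t * x i - R (i:ℕ) t * y i)
              = fun i : Fin m => R (i:ℕ) t * (x i - y i) from funext fun i => (mul_sub _ _ _).symm]
            exact norm_sum_le _ _
        _ ≤ ∑ i : Fin m, ‖R (i:ℕ) t‖ * dist x y := by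
            apply Finset.sum_le_sum
            intro i _
            rw [norm_mul]
            apply mul_le_mul_of_nonneg_left _ (norm_nonneg _)
            rw [← dist_eq_norm]
            exact dist_le_pi_dist x y i
        _ = Nsum t * dist x y := by
            rw [hNs, ← Finset.sum_mul, Fin.sum_univ_eq_sum_range (fun l => ‖R l t‖)]
        _ ≤ K * dist x y := mul_le_mul_of_nonneg_right (hKub t) dist_nonneg
  set X : ℝ → (Fin m → ℂ) := fun t l => deriv^[(l : ℕ)] f (z0 + (t : ℂ)) with hX
  have hXR : ∀ (l : ℕ) (t : ℝ), t ∈ Set.Icc 0 δ →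
      HasDerivAt (fun u : ℝ => deriv^[l] f (z0 + (u:ℂ))) (deriv^[l+1] f (z0 + (t:ℂ))) t := by
    intro l t ht
    have hzUH : z0 + (t:ℂ) ∈ UH := hball (hmem_ball t ht)
    have h0 : HasDerivAt (deriv^[l] f) (deriv^[l+1] f (z0 + (t:ℂ))) (z0 + (t:ℂ)) := by
      have h := (analytic_iter hf l _ hzUH).differentiableAt.hasDerivAt
      rwa [show deriv (deriv^[l] f) (z0 + (t:ℂ)) = deriv^[l+1] f (z0 + (t:ℂ)) from
        (Function.iterate_succ_apply' deriv l f ▸ rfl)] at h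
    have h2 : HasDerivAt (fun s : ℂ => z0 + s) 1 (t:ℂ) := (hasDerivAt_id _).const_add z0
    have h3 := HasDerivAt.comp (t:ℂ) (by simpa using h0) h2
    rw [mul_one] at h3
    exact h3.comp_ofReal
  have hXd : ∀ t ∈ Set.Ico (0:ℝ) δ, HasDerivAt X (v t (X t)) t := by
    intro t ht
    have htIcc : t ∈ Set.Icc (0:ℝ) δ := ⟨ht.1, ht.2.le⟩
    apply hasDerivAt_pi.mpr
    intro l
    have hder := hXR (l : ℕ) t htIcc
    have hgoal : (v t (X t)) l = deriv^[(l:ℕ)+1] f (z0 + (t:ℂ)) := by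
      by_cases h : (l : ℕ) + 1 < m
      · simp only [hv, dif_pos h, hX]
      · simp only [hv, dif_neg h]
        have hlm : (l : ℕ) + 1 = m := by omega
        set z : ℂ := z0 + (t:ℂ) with hzdef
        have hzUH : z ∈ UH := hball (hmem_ball t htIcc)
        have hzball : z ∈ Metric.ball z0 r := hmem_ball t htIcc
        have hγt : γ t = z := by
          show z0 + ((proj t : ℝ) : ℂ) = z
          rw [hproj_eq t htIcc]
        have hBz : B m z ≠ 0 := hBm z hzball
        have hsum := hode z hzUH
        rw [Finset.sum_range_succ] at hsum
        have hXt : ∀ i : Fin m, X t i = deriv^[(i:ℕ)] f z := fun i => rfl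
        rw [hlm]
        have : ∑ i : Fin m, R (i:ℕ) t * X t i
            = (∑ i ∈ Finset.range m, B i z * deriv^[i] f z) / B m z := by
          rw [← Fin.sum_univ_eq_sum_range (fun i => B i z * deriv^[i] f z), Finset.sum_div]
          refine Finset.sum_congr rfl fun i _ => ?_
          show B (i:ℕ) (γ t) / B m (γ t) * X t i = _
          rw [hXt i, hγt]
          ring
        rw [this]
        field_simp
        linear_combination -hsum
    rw [hgoal]
    exact hder
  have hXcont : ContinuousOn X (Set.Icc 0 δ) := by
    intro t ht
    have hX' : HasDerivAt X (fun l : Fin m => deriv^[(l:ℕ)+1] f (z0 + (t:ℂ))) t :=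
      hasDerivAt_pi.mpr fun l => hXR (l:ℕ) t ht
    exact hX'.continuousAt.continuousWithinAt
  have hX0 : X 0 = 0 := by
    funext l
    simp only [hX, Complex.ofReal_zero, add_zero]
    exact hjets (l : ℕ) l.isLt
  have huniq : Set.EqOn X 0 (Set.Icc 0 δ) := by
    apply ODE_solution_unique hlip hXcont
      (fun t ht => (hXd t ht).hasDerivWithinAt) continuousOn_const
      (fun t ht => by
        have h0 : v t (fun _ => 0) = (0 : Fin m → ℂ) := hv0 t
        rw [h0]
        exact hasDerivWithinAt_const t _ _)
    rw [hX0]; rfl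
  intro t ht
  have := congrFun (huniq ht) ⟨0, hm⟩
  simpa [hX] using this

lemma vanish_UH {f : ℂ → ℂ} (hf : AnalyticOnNhd ℂ f UH) {z0 : ℂ} (hz0 : z0 ∈ UH)
    {δ : ℝ} (hδ : 0 < δ) (hvan : ∀ t ∈ Set.Icc (0:ℝ) δ, f (z0 + t) = 0) :
    Set.EqOn f 0 UH := by
  apply hf.eqOn_zero_of_preconnected_of_frequently_eq_zero UH_preconnected hz0
  have h1 : Filter.Tendsto (fun nn : ℕ => δ / (nn + 1 : ℝ)) Filter.atTop (nhds 0) := by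
    have h0 := (tendsto_const_div_atTop_nhds_zero_nat δ).comp (Filter.tendsto_add_atTop_nat 1)
    apply h0.congr
    intro nn
    simp only [Function.comp_apply]
    norm_cast
  have h2 : Filter.Tendsto (fun nn : ℕ => z0 + ((δ / (nn + 1 : ℝ) : ℝ) : ℂ))
      Filter.atTop (nhds z0) := by
    have h3 := (Complex.continuous_ofReal.tendsto 0).comp h1
    have h4 := Filter.Tendsto.const_add z0 h3
    simpa using h4
  have h5 : Filter.Tendsto (fun nn : ℕ => z0 + ((δ / (nn + 1 : ℝ) : ℝ) : ℂ))
      Filter.atTop (nhdsWithin z0 {z | z ≠ z0}) := by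
    apply tendsto_nhdsWithin_of_tendsto_nhds_of_eventually_within _ h2
    apply Filter.Eventually.of_forall
    intro nn
    have hpos : 0 < δ / (nn + 1 : ℝ) := by positivity
    simp only [Set.mem_setOf_eq, ne_eq, add_eq_left]
    exact_mod_cast ne_of_gt hpos
  apply h5.frequently
  apply Filter.Frequently.of_forall
  intro nn
  apply hvan
  constructor
  · positivity
  · apply div_le_self hδ.le
    have h6 : (0:ℝ) ≤ (nn:ℝ) := Nat.cast_nonneg nn
    linarith

end AuxVVMF

/-- If the `d` components of a vector-valued modular form `F` of weight `k` are linearly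
independent, then `F, D_kF, …, D_k^{n−1}F` (`n ≤ d`) are linearly independent over the
ring `M = ℂ[E₄,E₆]` of level-one holomorphic modular forms. -/
theorem stmt_11 {d : ℕ} (hd : 2 ≤ d) (n : ℕ) (hn : n ≤ d) (k : ℝ)
    (ρ : SL2Z →* GL (Fin d) ℂ) (υ : SL2Z → ℂ) (F : Fin d → ℂ → ℂ)
    (hF : IsVVMF k ρ υ F)
    (hind : ∀ c : Fin d → ℂ, (∀ z ∈ UH, ∑ i, c i * F i z = 0) → c = 0) :
    ∀ M : Fin n → (ℂ → ℂ),
      (∀ j, M j ∈ Algebra.adjoin ℂ ({Ez 4, Ez 6} : Set (ℂ → ℂ))) →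
      (∀ i, ∀ z ∈ UH, ∑ j, M j z * serreDzIter (j : ℕ) k (F i) z = 0) →
      ∀ j : Fin n, ∀ z ∈ UH, M j z = 0 := by
  intro M hM hrel
  by_contra hcon
  push_neg at hcon
  obtain ⟨j0, z00, hz00, hMj0⟩ := hcon
  classical
  have hFan : ∀ i, AnalyticOnNhd ℂ (F i) UH := fun i => (hF.1 i).analyticOnNhd UH_open
  have hMan : ∀ j, AnalyticOnNhd ℂ (M j) UH := fun j => adjoin_analytic (hM j)
  set T : Finset (Fin n) := Finset.univ.filter (fun j => ∃ z ∈ UH, M j z ≠ 0) with hT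
  have hTne : T.Nonempty := ⟨j0, by
    simp only [hT, Finset.mem_filter, Finset.mem_univ, true_and]
    exact ⟨z00, hz00, hMj0⟩⟩
  set j1 : Fin n := T.max' hTne with hj1
  obtain ⟨z0, hz0, hMz0⟩ : ∃ z ∈ UH, M j1 z ≠ 0 := by
    have h := T.max'_mem hTne
    simpa [hT] using h
  set m : ℕ := (j1 : ℕ) with hmdef
  have hmn : m < n := j1.isLt
  have hvanish : ∀ j : Fin n, m < (j : ℕ) → ∀ z ∈ UH, M j z = 0 := by
    intro j hj z hz
    by_contra hne
    have hjT : j ∈ T := by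
      simp only [hT, Finset.mem_filter, Finset.mem_univ, true_and]
      exact ⟨z, hz, hne⟩
    have hle := T.le_max' j hjT
    rw [Fin.le_def] at hle
    omega
  choose a ha haj ha0 hrepr using fun j : Fin n => serre_poly k (j : ℕ)
  set B : ℕ → ℂ → ℂ := fun l z => ∑ j : Fin n, M j z * a j l z with hB
  have hBan : ∀ l, AnalyticOnNhd ℂ (B l) UH := by
    intro l
    show AnalyticOnNhd ℂ (fun z => ∑ j : Fin n, M j z * a j l z) UH
    rw [show (fun z => ∑ j : Fin n, M j z * a j l z) = ∑ j : Fin n, (fun z => M j z * a j l z) from by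
      funext z; simp [Finset.sum_apply]]
    apply Finset.analyticOnNhd_sum
    exact fun j _ => (hMan j).mul (ha j l)
  have key0 : ∀ i, ∀ z ∈ UH, ∑ l ∈ Finset.range (m+1), B l z * deriv^[l] (F i) z = 0 := by
    intro i z hz
    have h3 : ∑ l ∈ Finset.range (m+1), B l z * deriv^[l] (F i) z
        = ∑ j : Fin n, M j z * ∑ l ∈ Finset.range (m+1), a j l z * deriv^[l] (F i) z := by
      have hBl : ∀ l, B l z = ∑ j : Fin n, M j z * a j l z := fun l => rfl
      calc ∑ l ∈ Finset.range (m+1), B l z * deriv^[l] (F i) z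
          = ∑ l ∈ Finset.range (m+1), ∑ j : Fin n,
              M j z * (a j l z * deriv^[l] (F i) z) := by
            refine Finset.sum_congr rfl fun l _ => ?_
            rw [hBl l, Finset.sum_mul]
            exact Finset.sum_congr rfl fun j _ => by ring
        _ = ∑ j : Fin n, ∑ l ∈ Finset.range (m+1),
              M j z * (a j l z * deriv^[l] (F i) z) := Finset.sum_comm
        _ = ∑ j : Fin n, M j z * ∑ l ∈ Finset.range (m+1),
              a j l z * deriv^[l] (F i) z := by
            refine Finset.sum_congr rfl fun j _ => ?_
            rw [Finset.mul_sum]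
    rw [h3, ← hrel i z hz]
    refine Finset.sum_congr rfl fun j _ => ?_
    rcases le_or_gt ((j:ℕ)) m with hjm | hjm
    · congr 1
      rw [hrepr j (F i) (hFan i) z hz]
      symm
      apply Finset.sum_subset
      · intro x hx
        simp only [Finset.mem_range] at hx ⊢
        omega
      · intro x hx1 hx2
        simp only [Finset.mem_range] at hx1 hx2
        rw [show a j x = fun _ => (0:ℂ) from ha0 j x (by omega)]
        simp
    · rw [hvanish j hjm z hz]
      ring
  have key : ∀ c : Fin d → ℂ, ∀ z ∈ UH,
      ∑ l ∈ Finset.range (m+1), B l z * deriv^[l] (fun w => ∑ i, c i * F i w) z = 0 := by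
    intro c z hz
    calc ∑ l ∈ Finset.range (m+1), B l z * deriv^[l] (fun w => ∑ i, c i * F i w) z
        = ∑ l ∈ Finset.range (m+1), ∑ i, c i * (B l z * deriv^[l] (F i) z) := by
          refine Finset.sum_congr rfl fun l _ => ?_
          rw [iter_deriv_sum hFan c l z hz, Finset.mul_sum]
          exact Finset.sum_congr rfl fun i _ => by ring
      _ = ∑ i, c i * ∑ l ∈ Finset.range (m+1), B l z * deriv^[l] (F i) z := by
          rw [Finset.sum_comm]
          exact Finset.sum_congr rfl fun i _ => by rw [Finset.mul_sum]
      _ = 0 := by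
          rw [Finset.sum_eq_zero]
          intro i _
          rw [key0 i z hz, mul_zero]
  have hBm_eq : ∀ z ∈ UH, B m z = M j1 z * (1 / (2 * (π:ℂ) * Complex.I)) ^ m := by
    intro z hz
    show ∑ j : Fin n, M j z * a j m z = _
    rw [Finset.sum_eq_single j1]
    · rw [show a j1 m = fun _ => (1 / (2 * (π:ℂ) * Complex.I)) ^ m from haj j1]
    · intro j _ hjne
      rcases lt_or_ge ((j:ℕ)) m with hlt | hle
      · rw [show a j m = fun _ => (0:ℂ) from ha0 j m hlt]
        simp
      · have hgt : m < (j:ℕ) := lt_of_le_of_ne hle (fun hh => hjne (Fin.ext hh.symm))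
        rw [hvanish j hgt z hz]
        ring
    · intro h
      exact absurd (Finset.mem_univ j1) h
  have hcne : (1 / (2 * (π:ℂ) * Complex.I)) ≠ 0 := by
    apply one_div_ne_zero
    simp [Real.pi_ne_zero, Complex.I_ne_zero, Complex.ofReal_ne_zero]
  have hBmz0 : B m z0 ≠ 0 := by
    rw [hBm_eq z0 hz0]
    exact mul_ne_zero hMz0 (pow_ne_zero _ hcne)
  obtain ⟨r, hr0, hrball⟩ : ∃ r > 0, Metric.ball z0 r ⊆ {z | B m z ≠ 0} ∩ UH := by
    apply Metric.mem_nhds_iff.mp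
    apply Filter.inter_mem
    · exact (hBan m z0 hz0).continuousAt.eventually_ne hBmz0
    · exact UH_open.mem_nhds hz0
  set φ : (Fin d → ℂ) →ₗ[ℂ] (Fin m → ℂ) :=
    { toFun := fun c l => ∑ i, c i * deriv^[(l:ℕ)] (F i) z0
      map_add' := by
        intro x y
        funext l
        simp [add_mul, Finset.sum_add_distrib]
      map_smul' := by
        intro s x
        funext l
        simp [Finset.mul_sum, mul_assoc] } with hφ
  have hφinj : Function.Injective φ := by
    rw [← LinearMap.ker_eq_bot, LinearMap.ker_eq_bot']
    intro c hc
    have hfan : AnalyticOnNhd ℂ (fun w => ∑ i, c i * F i w) UH := comb_analytic hFan c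
    have hjets : ∀ l, l < m → deriv^[l] (fun w => ∑ i, c i * F i w) z0 = 0 := by
      intro l hl
      have h := congrFun hc ⟨l, hl⟩
      have h2 : ∑ i, c i * deriv^[l] (F i) z0 = 0 := h
      rw [iter_deriv_sum hFan c l z0 hz0]
      exact h2
    have hode : ∀ z ∈ UH,
        ∑ l ∈ Finset.range (m+1), B l z * deriv^[l] (fun w => ∑ i, c i * F i w) z = 0 := key c
    have hvan : ∀ t ∈ Set.Icc (0:ℝ) (r/2), (fun w => ∑ i, c i * F i w) (z0 + t) = 0 := by
      rcases Nat.eq_zero_or_pos m with hm0 | hmpos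
      · intro t ht
        have hzball : z0 + (t:ℂ) ∈ Metric.ball z0 r := by
          simp only [Metric.mem_ball, Complex.dist_eq, add_sub_cancel_left, Complex.norm_real, Real.norm_eq_abs]
          rw [_root_.abs_of_nonneg ht.1]
          linarith [ht.2]
        have hzUH : z0 + (t:ℂ) ∈ UH := (hrball hzball).2
        have h := hode _ hzUH
        rw [hm0] at h
        simp only [zero_add, Finset.range_one, Finset.sum_singleton, Function.iterate_zero_apply] at h
        have hBne : B 0 (z0 + (t:ℂ)) ≠ 0 := by
          have := (hrball hzball).1
          rwa [hm0] at this
        exact (mul_eq_zero.mp h).resolve_left hBne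
      · exact ode_vanish hmpos hBan hfan hz0 hr0
          (fun z hz => (hrball hz).2) (fun z hz => (hrball hz).1) hjets hode
    have hzero : Set.EqOn (fun w => ∑ i, c i * F i w) 0 UH :=
      vanish_UH hfan hz0 (by positivity) hvan
    exact hind c (fun z hz => hzero hz)
  have hd2 : d ≤ m := by
    have h := LinearMap.finrank_le_finrank_of_injective hφinj
    simpa using h
  omega
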